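/- Let N ⊆ M with Markov trace of modulus τ and Jones projection e₁, and let λ₁,…,λₙ ∈ M. Then the following are equivalent: (1) the matrix Q = (E_N(λᵢλⱼ*)) is a projection in Mₙ(N) with normalized trace τ⁻¹/n; (2) Σᵢ λᵢ* e₁ λᵢ = 1; (3) every x ∈ M satisfies x = Σᵢ E_N(xλᵢ*) λᵢ. -/

import Mathlib

/- STATEMENT 1: Let N ⊆ M with Markov trace of modulus τ and Jones projection e₁, and
let λ₁,…,λₙ ∈ M.  TFAE:
(1) the matrix Q = (E_N(λᵢλⱼ*)) is a projection in Mₙ(N) with normalized trace τ⁻¹/n;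
(2) Σᵢ λᵢ* e₁ λᵢ = 1;
(3) every x ∈ M satisfies x = Σᵢ E_N(xλᵢ*) λᵢ.

We work in the ambient basic construction A = M₁ = ⟨M, e₁⟩, with the standard
properties of the Jones projection e₁, the tr-preserving conditional expectation E_N
onto N, the Markov trace (extended to M₁), and M e₁ M spanning M₁. -/
theorem stmt1 {A : Type*} [Ring A] [StarRing A] [Algebra ℂ A] [StarModule ℂ A]
    (N M : StarSubalgebra ℂ A) (hNM : N ≤ M)
    (e₁ : A) (heproj : e₁ * e₁ = e₁) (hestar : star e₁ = e₁)
    (τ : ℝ) (hτ : 0 < τ)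
    (EN : A →ₗ[ℂ] A)
    (hENmem : ∀ x ∈ M, EN x ∈ N) (hENfix : ∀ x ∈ N, EN x = x)
    (hENbim : ∀ a ∈ N, ∀ b ∈ N, ∀ x : A, EN (a * x * b) = a * EN x * b)
    (hENstar : ∀ x : A, EN (star x) = star (EN x))
    (hjones : ∀ x ∈ M, e₁ * x * e₁ = EN x * e₁)
    (hsep : ∀ x ∈ M, x * e₁ = 0 → x = 0)
    (tr : A →ₗ[ℂ] ℂ) (htr1 : tr 1 = 1)
    (htrace : ∀ x y : A, tr (x * y) = tr (y * x))
    (htrfaithful : ∀ x : A, tr (star x * x) = 0 → x = 0)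
    (htrpos : ∀ x : A, 0 ≤ (tr (star x * x)).re ∧ (tr (star x * x)).im = 0)
    (htrEN : ∀ x ∈ M, tr (EN x) = tr x)
    (hmarkov : ∀ x ∈ M, tr (x * e₁) = (τ : ℂ) * tr x)
    (hdense : Submodule.span ℂ {z : A | ∃ x ∈ M, ∃ y ∈ M, z = x * e₁ * y} = ⊤)
    (n : ℕ) (hn : 0 < n) (l : Fin n → A) (hl : ∀ i, l i ∈ M) :
    List.TFAE
      [ -- (1) Q is a projection in Mₙ(N) of normalized trace τ⁻¹/n
        (let Q : Matrix (Fin n) (Fin n) A := Matrix.of fun i j => EN (l i * star (l j));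
          (∀ i j, Q i j ∈ N) ∧ Q * Q = Q ∧ Q.conjTranspose = Q ∧
            ((n : ℂ))⁻¹ * ∑ i, tr (Q i i) = (τ : ℂ)⁻¹ / (n : ℂ)),
        -- (2) Σᵢ λᵢ* e₁ λᵢ = 1
        (∑ i, star (l i) * e₁ * l i = 1),
        -- (3) every x ∈ M satisfies x = Σᵢ E_N(x λᵢ*) λᵢ
        (∀ x ∈ M, x = ∑ i, EN (x * star (l i)) * l i) ] := by
  have h1N : (1 : A) ∈ N := N.one_mem
  have hτ0 : (τ : ℂ) ≠ 0 := by exact_mod_cast hτ.ne'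
  have hENleft : ∀ a ∈ N, ∀ x : A, EN (a * x) = a * EN x := by
    intro a ha x; simpa using hENbim a ha 1 h1N x
  have hENright : ∀ b ∈ N, ∀ x : A, EN (x * b) = EN x * b := by
    intro b hb x; simpa using hENbim 1 h1N b hb x
  have hmemQ : ∀ i j, EN (l i * star (l j)) ∈ N :=
    fun i j => hENmem _ (mul_mem (hl i) (star_mem (hl j)))
  -- e₁ commutes with N
  have hcomm : ∀ a ∈ N, e₁ * a = a * e₁ := by
    intro a ha
    have haM : a ∈ M := hNM ha
    have hasN : star a ∈ N := star_mem ha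
    have hasM : star a ∈ M := hNM hasN
    have e1 : e₁ * a * e₁ = a * e₁ := by rw [hjones a haM, hENfix a ha]
    have e2 : e₁ * star a * e₁ = star a * e₁ := by rw [hjones _ hasM, hENfix _ hasN]
    have e3 : e₁ * (star a * a) * e₁ = star a * a * e₁ := by
      rw [hjones _ (mul_mem hasM haM), hENfix _ (mul_mem hasN ha)]
    have hz : star (e₁ * a - a * e₁) * (e₁ * a - a * e₁) = 0 := by
      have hst : star (e₁ * a - a * e₁) = star a * e₁ - e₁ * star a := by
        simp [star_sub, star_mul, hestar]
      rw [hst]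
      have expand : (star a * e₁ - e₁ * star a) * (e₁ * a - a * e₁)
          = star a * (e₁ * e₁) * a - star a * (e₁ * a * e₁)
            - (e₁ * star a * e₁) * a + e₁ * (star a * a) * e₁ := by noncomm_ring
      rw [expand, heproj, e1, e2, e3]
      noncomm_ring
    have h0 := htrfaithful _ (by rw [hz, map_zero])
    exact sub_eq_zero.mp h0
  -- (2) → (3)
  have h23 : (∑ i, star (l i) * e₁ * l i = 1) →
      (∀ x ∈ M, x = ∑ i, EN (x * star (l i)) * l i) := by
    intro h2 x hx
    have key : e₁ * x = e₁ * ∑ i, EN (x * star (l i)) * l i := by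
      calc e₁ * x = e₁ * x * ∑ i, star (l i) * e₁ * l i := by rw [h2, mul_one]
        _ = ∑ i, e₁ * x * (star (l i) * e₁ * l i) := Finset.mul_sum _ _ _
        _ = ∑ i, (e₁ * (x * star (l i)) * e₁) * l i := by
            exact Finset.sum_congr rfl fun i _ => by noncomm_ring
        _ = ∑ i, (EN (x * star (l i)) * e₁) * l i := by
            exact Finset.sum_congr rfl fun i _ => by
              rw [hjones _ (mul_mem hx (star_mem (hl i)))]
        _ = ∑ i, e₁ * (EN (x * star (l i)) * l i) := by
            exact Finset.sum_congr rfl fun i _ => by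
              rw [← hcomm _ (hENmem _ (mul_mem hx (star_mem (hl i)))), mul_assoc]
        _ = e₁ * ∑ i, EN (x * star (l i)) * l i := (Finset.mul_sum _ _ _).symm
    have hyM : (∑ i, EN (x * star (l i)) * l i) ∈ M :=
      sum_mem fun i _ => mul_mem (hNM (hENmem _ (mul_mem hx (star_mem (hl i))))) (hl i)
    have hd : star (x - ∑ i, EN (x * star (l i)) * l i) * e₁ = 0 := by
      have h0 : e₁ * (x - ∑ i, EN (x * star (l i)) * l i) = 0 := by
        rw [mul_sub, key, sub_self]
      calc star (x - ∑ i, EN (x * star (l i)) * l i) * e₁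
          = star (e₁ * (x - ∑ i, EN (x * star (l i)) * l i)) := by rw [star_mul, hestar]
        _ = 0 := by rw [h0, star_zero]
    have h0 := hsep _ (star_mem (sub_mem hx hyM)) hd
    have h1 : x - ∑ i, EN (x * star (l i)) * l i = 0 := by
      have := congrArg star h0
      rwa [star_star, star_zero] at this
    exact sub_eq_zero.mp h1
  -- (3) → (2)
  have h32 : (∀ x ∈ M, x = ∑ i, EN (x * star (l i)) * l i) →
      (∑ i, star (l i) * e₁ * l i = 1) := by
    intro h3
    have key : ∀ x ∈ M, ∀ y ∈ M,
        (x * e₁ * y) * (∑ i, star (l i) * e₁ * l i) = x * e₁ * y := by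
      intro x hx y hy
      calc (x * e₁ * y) * (∑ i, star (l i) * e₁ * l i)
          = ∑ i, (x * e₁ * y) * (star (l i) * e₁ * l i) := Finset.mul_sum _ _ _
        _ = ∑ i, x * (e₁ * (y * star (l i)) * e₁) * l i := by
            exact Finset.sum_congr rfl fun i _ => by noncomm_ring
        _ = ∑ i, x * (EN (y * star (l i)) * e₁) * l i := by
            exact Finset.sum_congr rfl fun i _ => by
              rw [hjones _ (mul_mem hy (star_mem (hl i)))]
        _ = ∑ i, x * e₁ * (EN (y * star (l i)) * l i) := by
            exact Finset.sum_congr rfl fun i _ => by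
              rw [← hcomm _ (hENmem _ (mul_mem hy (star_mem (hl i))))]; noncomm_ring
        _ = x * e₁ * ∑ i, EN (y * star (l i)) * l i := (Finset.mul_sum _ _ _).symm
        _ = x * e₁ * y := by rw [← h3 y hy]
    set T : A →ₗ[ℂ] A :=
      LinearMap.mulRight ℂ (∑ i, star (l i) * e₁ * l i) - LinearMap.id with hT
    have hTker : Submodule.span ℂ {z : A | ∃ x ∈ M, ∃ y ∈ M, z = x * e₁ * y} ≤
        LinearMap.ker T := by
      rw [Submodule.span_le]
      rintro z ⟨x, hx, y, hy, rfl⟩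
      simp only [SetLike.mem_coe, LinearMap.mem_ker, hT, LinearMap.sub_apply,
        LinearMap.mulRight_apply, LinearMap.id_apply, key x hx y hy, sub_self]
    have h1ker : (1 : A) ∈ LinearMap.ker T :=
      hTker (by rw [hdense]; exact Submodule.mem_top)
    have h0 : (∑ i, star (l i) * e₁ * l i) - 1 = 0 := by
      simpa [hT, LinearMap.sub_apply, LinearMap.mulRight_apply] using h1ker
    exact sub_eq_zero.mp h0
  -- (2) → (1)
  have h21 : (∑ i, star (l i) * e₁ * l i = 1) →
      (let Q : Matrix (Fin n) (Fin n) A := Matrix.of fun i j => EN (l i * star (l j));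
        (∀ i j, Q i j ∈ N) ∧ Q * Q = Q ∧ Q.conjTranspose = Q ∧
          ((n : ℂ))⁻¹ * ∑ i, tr (Q i i) = (τ : ℂ)⁻¹ / (n : ℂ)) := by
    intro h2
    have h3 := h23 h2
    have hQmul : ∀ i j, ∑ k, EN (l i * star (l k)) * EN (l k * star (l j))
        = EN (l i * star (l j)) := by
      intro i j
      conv_rhs => rw [h3 (l i) (hl i)]
      rw [Finset.sum_mul, map_sum]
      exact Finset.sum_congr rfl fun k _ => by
        rw [mul_assoc, hENleft _ (hmemQ i k)]
    refine ⟨fun i j => hmemQ i j, ?_, ?_, ?_⟩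
    · ext i j
      rw [Matrix.mul_apply]
      simpa [Matrix.of_apply] using hQmul i j
    · ext i j
      simp only [Matrix.conjTranspose_apply, Matrix.of_apply]
      rw [← hENstar, star_mul, star_star]
    · have htrsum : ∑ i, tr (EN (l i * star (l i))) = (τ : ℂ)⁻¹ := by
        have h := congrArg tr h2
        rw [map_sum, htr1] at h
        have hterm : ∀ i, tr (star (l i) * e₁ * l i)
            = (τ : ℂ) * tr (EN (l i * star (l i))) := by
          intro i
          rw [htrace, ← mul_assoc, hmarkov _ (mul_mem (hl i) (star_mem (hl i))),
            htrEN _ (mul_mem (hl i) (star_mem (hl i)))]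
        rw [Finset.sum_congr rfl (fun i _ => hterm i), ← Finset.mul_sum] at h
        calc ∑ i, tr (EN (l i * star (l i)))
            = (τ : ℂ)⁻¹ * ((τ : ℂ) * ∑ i, tr (EN (l i * star (l i)))) := by
              rw [← mul_assoc, inv_mul_cancel₀ hτ0, one_mul]
          _ = (τ : ℂ)⁻¹ * 1 := by rw [h]
          _ = (τ : ℂ)⁻¹ := mul_one _
      simp only [Matrix.of_apply]
      rw [htrsum, div_eq_mul_inv, mul_comm]
  -- (1) → (2)
  have h12 : (let Q : Matrix (Fin n) (Fin n) A := Matrix.of fun i j => EN (l i * star (l j));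
        (∀ i j, Q i j ∈ N) ∧ Q * Q = Q ∧ Q.conjTranspose = Q ∧
          ((n : ℂ))⁻¹ * ∑ i, tr (Q i i) = (τ : ℂ)⁻¹ / (n : ℂ)) →
      (∑ i, star (l i) * e₁ * l i = 1) := by
    intro h1
    obtain ⟨hQN, hQsq, -, htrQ⟩ := h1
    have hn0 : ((n : ℂ)) ≠ 0 := Nat.cast_ne_zero.mpr hn.ne'
    have hQ : ∀ i j, ∑ k, EN (l i * star (l k)) * EN (l k * star (l j))
        = EN (l i * star (l j)) := by
      intro i j
      have h := congrArg (fun mat : Matrix (Fin n) (Fin n) A => mat i j) hQsq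
      simpa [Matrix.mul_apply] using h
    have hS : ∑ i, tr (EN (l i * star (l i))) = (τ : ℂ)⁻¹ := by
      simp only [Matrix.of_apply] at htrQ
      calc ∑ i, tr (EN (l i * star (l i)))
          = (n : ℂ) * ((n : ℂ)⁻¹ * ∑ i, tr (EN (l i * star (l i)))) := by
            rw [← mul_assoc, mul_inv_cancel₀ hn0, one_mul]
        _ = (n : ℂ) * ((τ : ℂ)⁻¹ / (n : ℂ)) := by rw [htrQ]
        _ = (τ : ℂ)⁻¹ := by field_simp
    set f : A := ∑ i, star (l i) * e₁ * l i with hf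
    have hterm : ∀ i k, (star (l i) * e₁ * l i) * (star (l k) * e₁ * l k)
        = star (l i) * EN (l i * star (l k)) * e₁ * l k := by
      intro i k
      have h := hjones _ (mul_mem (hl i) (star_mem (hl k)))
      calc (star (l i) * e₁ * l i) * (star (l k) * e₁ * l k)
          = star (l i) * (e₁ * (l i * star (l k)) * e₁) * l k := by noncomm_ring
        _ = star (l i) * (EN (l i * star (l k)) * e₁) * l k := by rw [h]
        _ = star (l i) * EN (l i * star (l k)) * e₁ * l k := by noncomm_ring
    have hf2 : f * f = ∑ i, ∑ k, star (l i) * EN (l i * star (l k)) * e₁ * l k := by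
      rw [hf, Finset.sum_mul_sum]
      exact Finset.sum_congr rfl fun i _ => Finset.sum_congr rfl fun k _ => hterm i k
    have hjik : ∀ j i k, (star (l j) * e₁ * l j) * (star (l i) * EN (l i * star (l k)) * e₁ * l k)
        = star (l j) * (EN (l j * star (l i)) * EN (l i * star (l k))) * e₁ * l k := by
      intro j i k
      have hb := hmemQ i k
      have hx : l j * star (l i) * EN (l i * star (l k)) ∈ M :=
        mul_mem (mul_mem (hl j) (star_mem (hl i))) (hNM hb)
      have h := hjones _ hx
      have hEN : EN (l j * star (l i) * EN (l i * star (l k)))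
          = EN (l j * star (l i)) * EN (l i * star (l k)) := hENright _ hb _
      calc (star (l j) * e₁ * l j) * (star (l i) * EN (l i * star (l k)) * e₁ * l k)
          = star (l j) * (e₁ * (l j * star (l i) * EN (l i * star (l k))) * e₁) * l k := by
            noncomm_ring
        _ = star (l j) * (EN (l j * star (l i) * EN (l i * star (l k))) * e₁) * l k := by
            rw [h]
        _ = star (l j) * (EN (l j * star (l i)) * EN (l i * star (l k))) * e₁ * l k := by
            rw [hEN]; noncomm_ring
    have hfp : f * (f * f) = f * f := by
      rw [hf2]
      calc f * (∑ i, ∑ k, star (l i) * EN (l i * star (l k)) * e₁ * l k)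
          = ∑ j, ∑ i, ∑ k, (star (l j) * e₁ * l j)
              * (star (l i) * EN (l i * star (l k)) * e₁ * l k) := by
            rw [hf, Finset.sum_mul]
            exact Finset.sum_congr rfl fun j _ => by
              rw [Finset.mul_sum]
              exact Finset.sum_congr rfl fun i _ => Finset.mul_sum _ _ _
        _ = ∑ j, ∑ k, star (l j) * EN (l j * star (l k)) * e₁ * l k := by
            refine Finset.sum_congr rfl fun j _ => ?_
            rw [Finset.sum_comm]
            refine Finset.sum_congr rfl fun k _ => ?_
            calc (∑ i, (star (l j) * e₁ * l j)
                    * (star (l i) * EN (l i * star (l k)) * e₁ * l k))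
                = ∑ i, star (l j) * (EN (l j * star (l i)) * EN (l i * star (l k))) * e₁ * l k :=
                  Finset.sum_congr rfl fun i _ => hjik j i k
              _ = star (l j) * (∑ i, EN (l j * star (l i)) * EN (l i * star (l k))) * e₁ * l k := by
                  simp only [← Finset.sum_mul, ← Finset.mul_sum]
              _ = star (l j) * EN (l j * star (l k)) * e₁ * l k := by rw [hQ j k]
    have hfstar : star f = f := by
      rw [hf, star_sum]
      exact Finset.sum_congr rfl fun i _ => by
        simp [star_mul, hestar, mul_assoc]
    have htrf2 : tr (f * f) = 1 := by
      rw [hf2, map_sum]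
      have hterm2 : ∀ i k, tr (star (l i) * EN (l i * star (l k)) * e₁ * l k)
          = (τ : ℂ) * tr (EN (l k * star (l i)) * EN (l i * star (l k))) := by
        intro i k
        have hxM : l k * star (l i) * EN (l i * star (l k)) ∈ M :=
          mul_mem (mul_mem (hl k) (star_mem (hl i))) (hNM (hmemQ i k))
        rw [htrace,
          show l k * (star (l i) * EN (l i * star (l k)) * e₁)
              = (l k * star (l i) * EN (l i * star (l k))) * e₁ by noncomm_ring,
          hmarkov _ hxM, ← htrEN _ hxM, hENright _ (hmemQ i k)]
      calc ∑ i, tr (∑ k, star (l i) * EN (l i * star (l k)) * e₁ * l k)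
          = ∑ i, ∑ k, (τ : ℂ) * tr (EN (l k * star (l i)) * EN (l i * star (l k))) := by
            exact Finset.sum_congr rfl fun i _ => by
              rw [map_sum]
              exact Finset.sum_congr rfl fun k _ => hterm2 i k
        _ = ∑ k, ∑ i, (τ : ℂ) * tr (EN (l k * star (l i)) * EN (l i * star (l k))) :=
            Finset.sum_comm
        _ = (τ : ℂ) * ∑ k, tr (∑ i, EN (l k * star (l i)) * EN (l i * star (l k))) := by
            rw [Finset.mul_sum]
            exact Finset.sum_congr rfl fun k _ => by rw [map_sum, Finset.mul_sum]
        _ = (τ : ℂ) * ∑ k, tr (EN (l k * star (l k))) := by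
            rw [Finset.sum_congr rfl fun k _ => by rw [hQ k k]]
        _ = (τ : ℂ) * (τ : ℂ)⁻¹ := by rw [hS]
        _ = 1 := mul_inv_cancel₀ hτ0
    have hpp : (f * f) * (f * f) = f * f := by
      have ha : (f * f) * (f * f) = f * (f * (f * f)) := by noncomm_ring
      rw [ha, hfp, hfp]
    have hstarq : star (1 - f * f) = 1 - f * f := by
      rw [star_sub, star_one, star_mul, hfstar]
    have hqq : (1 - f * f) * (1 - f * f) = 1 - f * f := by
      have ha : (1 - f * f) * (1 - f * f)
          = 1 - f * f - f * f + (f * f) * (f * f) := by noncomm_ring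
      rw [ha, hpp]; noncomm_ring
    have htrq : tr (star (1 - f * f) * (1 - f * f)) = 0 := by
      rw [hstarq, hqq, map_sub, htr1, htrf2, sub_self]
    have hq0 : (1 : A) - f * f = 0 := htrfaithful _ htrq
    have hp1 : f * f = 1 := (sub_eq_zero.mp hq0).symm
    have hfone : f = 1 := by
      have h := hfp
      rw [hp1, mul_one] at h
      exact h
    exact hfone
  tfae_have 2 → 3 := h23
  tfae_have 3 → 2 := h32
  tfae_have 2 → 1 := h21
  tfae_have 1 → 2 := h12
  tfae_finish
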